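/- Matrix Laplace Transform Method. Let X be a random d×d Hermitian matrix with normalized trace moment generating function m(θ) := E tr̄ e^{θX} (the expectation assumed to exist where used). Then for each t ∈ ℝ: (i) P(λ_max(X) ≥ t) ≤ d · inf_{θ>0} exp(−θt + log m(θ)); (ii) P(λ_min(X) ≤ t) ≤ d · inf_{θ<0} exp(−θt + log m(θ)); (iii) E λ_max(X) ≤ inf_{θ>0} (1/θ)[log d + log m(θ)]; (iv) E λ_min(X) ≥ sup_{θ<0} (1/θ)[log d + log m(θ)]. -/

import Mathlib

open MeasureTheory
open scoped ComplexOrder Classical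

noncomputable instance {m n : ℕ} : MeasurableSpace (Matrix (Fin m) (Fin n) ℂ) :=
  inferInstanceAs (MeasurableSpace (Fin m → Fin n → ℂ))

/-- The spectral norm (largest singular value) of a complex matrix. -/
noncomputable def specNorm {m n : ℕ} (A : Matrix (Fin m) (Fin n) ℂ) : ℝ :=
  ‖LinearMap.toContinuousLinearMap (Matrix.toEuclideanLin A)‖

/-- The largest eigenvalue of a Hermitian matrix, via the Rayleigh quotient. -/
noncomputable def lmax {d : ℕ} (A : Matrix (Fin d) (Fin d) ℂ) : ℝ :=
  ⨆ x : Metric.sphere (0 : EuclideanSpace ℂ (Fin d)) 1,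
    (inner ℂ ((x : EuclideanSpace ℂ (Fin d))) (Matrix.toEuclideanLin A x) : ℂ).re

/-- The smallest eigenvalue of a Hermitian matrix, via the Rayleigh quotient. -/
noncomputable def lmin {d : ℕ} (A : Matrix (Fin d) (Fin d) ℂ) : ℝ :=
  ⨅ x : Metric.sphere (0 : EuclideanSpace ℂ (Fin d)) 1,
    (inner ℂ ((x : EuclideanSpace ℂ (Fin d))) (Matrix.toEuclideanLin A x) : ℂ).re

/-- The matrix exponential. -/
noncomputable def mexp {d : ℕ} (A : Matrix (Fin d) (Fin d) ℂ) : Matrix (Fin d) (Fin d) ℂ :=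
  NormedSpace.exp A

/-- The Schatten `p`-norm `(tr |B|^p)^(1/p)` of a complex matrix, computed via the
eigenvalues of `Bᴴ * B`. -/
noncomputable def schattenNorm {d : ℕ} (p : ℝ) (B : Matrix (Fin d) (Fin d) ℂ) : ℝ :=
  (∑ i, (Matrix.posSemidef_conjTranspose_mul_self B).isHermitian.eigenvalues i ^ (p / 2)) ^ (1 / p)

/-- The positive-semidefinite square root of a psd matrix (junk value `0` otherwise). -/
noncomputable def psdSqrt {d : ℕ} (M : Matrix (Fin d) (Fin d) ℂ) : Matrix (Fin d) (Fin d) ℂ :=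
  if h : M.PosSemidef then
    h.1.eigenvectorUnitary.1 * Matrix.diagonal ((↑) ∘ (√·) ∘ h.1.eigenvalues) *
      (star h.1.eigenvectorUnitary : Matrix (Fin d) (Fin d) ℂ)
  else 0

/-- The entrywise expectation of a random matrix. -/
noncomputable def matMean {Ω : Type*} [MeasurableSpace Ω] (μ : Measure Ω) {d : ℕ}
    (X : Ω → Matrix (Fin d) (Fin d) ℂ) : Matrix (Fin d) (Fin d) ℂ :=
  Matrix.of fun i j => ∫ ω, X ω i j ∂μ

/-- The normalized trace mgf `θ ↦ 𝔼 tr̄ exp (θ X)` of a random Hermitian matrix. -/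
noncomputable def traceMgf {Ω : Type*} [MeasurableSpace Ω] (μ : Measure Ω) {d : ℕ}
    (X : Ω → Matrix (Fin d) (Fin d) ℂ) (θ : ℝ) : ℝ :=
  ∫ ω, (Matrix.trace (mexp ((θ : ℂ) • X ω))).re / d ∂μ

/-- `(X, X') = (Ψ(Z), Ψ(Z'))` is a matrix Stein pair with scale factor `α`:
`(Z, Z')` is an exchangeable pair, `Ψ` takes Hermitian values,
`𝔼[X - X' ∣ Z] = α X` a.s., `α ∈ (0, 1]`, and `𝔼‖X‖² < ∞`. -/
structure IsMatrixSteinPair {Ω 𝒵 : Type*} [MeasurableSpace Ω] [MeasurableSpace 𝒵]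
    {d : ℕ} (μ : Measure Ω) (Z Z' : Ω → 𝒵) (Ψ : 𝒵 → Matrix (Fin d) (Fin d) ℂ)
    (α : ℝ) : Prop where
  measurable_fst : Measurable Z
  measurable_snd : Measurable Z'
  measurable_psi : ∀ i j, Measurable fun z => Ψ z i j
  hermitian : ∀ z, (Ψ z).IsHermitian
  exchangeable : μ.map (fun ω => (Z ω, Z' ω)) = μ.map fun ω => (Z' ω, Z ω)
  alpha_pos : 0 < α
  alpha_le_one : α ≤ 1
  stein : ∀ i j,
    μ[(fun ω => Ψ (Z ω) i j - Ψ (Z' ω) i j) | MeasurableSpace.comap Z inferInstance]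
      =ᵐ[μ] fun ω => (α : ℂ) * Ψ (Z ω) i j
  memLp_two : ∀ i j, MemLp (fun ω => Ψ (Z ω) i j) 2 μ

/-- The conditional variance `Δ_X = (1/(2α)) 𝔼[(X - X')² ∣ Z]` of a matrix Stein pair,
defined entrywise via conditional expectation with respect to `σ(Z)`. -/
noncomputable def condVar {Ω 𝒵 : Type*} [MeasurableSpace Ω] [MeasurableSpace 𝒵]
    {d : ℕ} (μ : Measure Ω) (Z Z' : Ω → 𝒵) (Ψ : 𝒵 → Matrix (Fin d) (Fin d) ℂ)
    (α : ℝ) : Ω → Matrix (Fin d) (Fin d) ℂ := fun ω =>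
  Matrix.of fun i j => (1 / (2 * α) : ℂ) *
    (μ[(fun ω' => ((Ψ (Z ω') - Ψ (Z' ω')) * (Ψ (Z ω') - Ψ (Z' ω'))) i j)
      | MeasurableSpace.comap Z inferInstance]) ω

/-- `s ↦ s log s` (with `0 log 0 = 0`) applied to the eigenvalues of a Hermitian matrix
(junk value `0` otherwise). -/
noncomputable def matLogSelf {d : ℕ} (M : Matrix (Fin d) (Fin d) ℂ) : Matrix (Fin d) (Fin d) ℂ :=
  if h : M.IsHermitian then h.cfc (fun x => x * Real.log x) else 0

open Matrix in
lemma trace_mexp_smul_re {d : ℕ} {A : Matrix (Fin d) (Fin d) ℂ} (hA : A.IsHermitian) (θ : ℝ) :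
    (Matrix.trace (mexp ((θ : ℂ) • A))).re = ∑ i, Real.exp (θ * hA.eigenvalues i) := by
  set U := Unitary.toUnits hA.eigenvectorUnitary with hUdef
  have h1 : (θ : ℂ) • A
      = (U : Matrix (Fin d) (Fin d) ℂ) * Matrix.diagonal (fun i => ((θ * hA.eigenvalues i : ℝ) : ℂ))
        * ((U⁻¹ : (Matrix (Fin d) (Fin d) ℂ)ˣ) : Matrix (Fin d) (Fin d) ℂ) := by
    have : ((U⁻¹ : (Matrix (Fin d) (Fin d) ℂ)ˣ) : Matrix (Fin d) (Fin d) ℂ)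
        = star (hA.eigenvectorUnitary : Matrix (Fin d) (Fin d) ℂ) := rfl
    rw [this]
    conv_lhs => rw [hA.spectral_theorem, Unitary.conjStarAlgAut_apply]
    have hdiag : (θ : ℂ) • Matrix.diagonal (RCLike.ofReal ∘ hA.eigenvalues)
        = Matrix.diagonal (fun i => ((θ * hA.eigenvalues i : ℝ) : ℂ)) := by
      ext i j
      rcases eq_or_ne i j with rfl | h
      · simp [Matrix.diagonal_apply_eq, Function.comp]
      · simp [Matrix.diagonal_apply_ne _ h]
    rw [← smul_mul_assoc, ← mul_smul_comm, hdiag]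
    rfl
  rw [mexp, h1, Matrix.exp_units_conj, Matrix.exp_diagonal]
  rw [Matrix.trace_mul_cycle]
  rw [Units.inv_mul, Matrix.one_mul, Matrix.trace_diagonal]
  rw [Complex.re_sum]
  refine Finset.sum_congr rfl fun i _ => ?_
  rw [Pi.exp_def, ← Complex.exp_eq_exp_ℂ]
  exact Complex.exp_ofReal_re _

open Matrix in
lemma rayleigh_repr {d : ℕ} {A : Matrix (Fin d) (Fin d) ℂ} (hA : A.IsHermitian)
    (x : EuclideanSpace ℂ (Fin d)) (hx : ‖x‖ = 1) :
    ∃ w : Fin d → ℝ, (∀ i, 0 ≤ w i) ∧ ∑ i, w i = 1 ∧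
      (inner ℂ x (Matrix.toEuclideanLin A x) : ℂ).re = ∑ i, hA.eigenvalues i * w i := by
  classical
  set U : Matrix (Fin d) (Fin d) ℂ := (hA.eigenvectorUnitary : Matrix (Fin d) (Fin d) ℂ) with hU
  have hUU : U * star U = 1 := Unitary.coe_mul_star_self hA.eigenvectorUnitary
  set x' : Fin d → ℂ := (WithLp.equiv 2 (Fin d → ℂ)) x with hx'
  set y : Fin d → ℂ := star U *ᵥ x' with hy
  have hstary : star x' ᵥ* U = star y := by
    rw [hy, star_mulVec, star_eq_conjTranspose, conjTranspose_conjTranspose]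
  have key : ∀ z : ℂ, ∀ c : ℝ, star z * ((c : ℂ) * z) = ((c * Complex.normSq z : ℝ) : ℂ) := by
    intro z c
    have : star z * ((c : ℂ) * z) = (c : ℂ) * (z * star z) := by ring
    rw [this, Complex.star_def, Complex.mul_conj]
    push_cast
    ring
  have hyy : (∑ i, Complex.normSq (y i) : ℝ) = 1 := by
    have h1 : star y ⬝ᵥ y = (1 : ℂ) := by
      rw [← hstary, ← dotProduct_mulVec, hy, mulVec_mulVec, hUU, one_mulVec,
        show star x' ⬝ᵥ x' = inner ℂ x x from (by rw [EuclideanSpace.inner_eq_star_dotProduct, dotProduct_comm] <;> rfl),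
        inner_self_eq_norm_sq_to_K, hx]
      norm_num
    have h2 : star y ⬝ᵥ y = ((∑ i, Complex.normSq (y i) : ℝ) : ℂ) := by
      rw [dotProduct]
      push_cast
      refine Finset.sum_congr rfl fun i _ => ?_
      have := key (y i) 1
      simpa using this
    rw [h2] at h1
    exact_mod_cast h1
  refine ⟨fun i => Complex.normSq (y i), fun i => Complex.normSq_nonneg _, hyy, ?_⟩
  have hmain : (inner ℂ x (Matrix.toEuclideanLin A x) : ℂ)
      = ∑ i, ((hA.eigenvalues i * Complex.normSq (y i) : ℝ) : ℂ) := by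
    rw [EuclideanSpace.inner_eq_star_dotProduct, dotProduct_comm]
    have hc : (WithLp.equiv 2 (Fin d → ℂ)) (Matrix.toEuclideanLin A x) = A *ᵥ x' := rfl
    change star x' ⬝ᵥ A *ᵥ x' = _
    conv_lhs => rw [hA.spectral_theorem, Unitary.conjStarAlgAut_apply]
    rw [← mulVec_mulVec, ← mulVec_mulVec, dotProduct_mulVec, hstary, dotProduct]
    refine Finset.sum_congr rfl fun i _ => ?_
    rw [Pi.star_apply, mulVec_diagonal]
    exact key (y i) (hA.eigenvalues i)
  rw [hmain, Complex.re_sum]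
  simp

lemma sphere_nonempty' {d : ℕ} (hd : 0 < d) :
    Nonempty (Metric.sphere (0 : EuclideanSpace ℂ (Fin d)) 1) := by
  refine ⟨⟨EuclideanSpace.single ⟨0, hd⟩ (1 : ℂ), ?_⟩⟩
  rw [mem_sphere_zero_iff_norm, EuclideanSpace.norm_single]
  norm_num

lemma exp_lmax_le {d : ℕ} (hd : 0 < d) {A : Matrix (Fin d) (Fin d) ℂ} (hA : A.IsHermitian)
    {θ : ℝ} (hθ : 0 < θ) :
    Real.exp (θ * lmax A) ≤ (Matrix.trace (mexp ((θ : ℂ) • A))).re := by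
  obtain ⟨k, -, hk⟩ := Finset.exists_max_image Finset.univ hA.eigenvalues
    ⟨⟨0, hd⟩, Finset.mem_univ _⟩
  have hlmax : lmax A ≤ hA.eigenvalues k := by
    haveI := sphere_nonempty' hd
    refine ciSup_le fun x => ?_
    obtain ⟨w, hw0, hw1, hwe⟩ := rayleigh_repr hA x (mem_sphere_zero_iff_norm.mp x.2)
    rw [hwe]
    calc ∑ i, hA.eigenvalues i * w i ≤ ∑ i, hA.eigenvalues k * w i := by
          refine Finset.sum_le_sum fun i _ => ?_
          exact mul_le_mul_of_nonneg_right (hk i (Finset.mem_univ i)) (hw0 i)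
      _ = hA.eigenvalues k := by rw [← Finset.mul_sum, hw1, mul_one]
  rw [trace_mexp_smul_re hA θ]
  calc Real.exp (θ * lmax A) ≤ Real.exp (θ * hA.eigenvalues k) := by
        exact Real.exp_le_exp.mpr (mul_le_mul_of_nonneg_left hlmax hθ.le)
    _ ≤ ∑ i, Real.exp (θ * hA.eigenvalues i) :=
        Finset.single_le_sum (f := fun i => Real.exp (θ * hA.eigenvalues i)) (fun i _ => (Real.exp_pos _).le) (Finset.mem_univ k)

lemma exp_lmin_le {d : ℕ} (hd : 0 < d) {A : Matrix (Fin d) (Fin d) ℂ} (hA : A.IsHermitian)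
    {θ : ℝ} (hθ : θ < 0) :
    Real.exp (θ * lmin A) ≤ (Matrix.trace (mexp ((θ : ℂ) • A))).re := by
  obtain ⟨k, -, hk⟩ := Finset.exists_min_image Finset.univ hA.eigenvalues
    ⟨⟨0, hd⟩, Finset.mem_univ _⟩
  have hlmin : hA.eigenvalues k ≤ lmin A := by
    haveI := sphere_nonempty' hd
    refine le_ciInf fun x => ?_
    obtain ⟨w, hw0, hw1, hwe⟩ := rayleigh_repr hA x (mem_sphere_zero_iff_norm.mp x.2)
    rw [hwe]
    calc hA.eigenvalues k = ∑ i, hA.eigenvalues k * w i := by rw [← Finset.mul_sum, hw1, mul_one]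
      _ ≤ ∑ i, hA.eigenvalues i * w i := by
          refine Finset.sum_le_sum fun i _ => ?_
          exact mul_le_mul_of_nonneg_right (hk i (Finset.mem_univ i)) (hw0 i)
  rw [trace_mexp_smul_re hA θ]
  calc Real.exp (θ * lmin A) ≤ Real.exp (θ * hA.eigenvalues k) := by
        exact Real.exp_le_exp.mpr (mul_le_mul_of_nonpos_left hlmin hθ.le)
    _ ≤ ∑ i, Real.exp (θ * hA.eigenvalues i) :=
        Finset.single_le_sum (f := fun i => Real.exp (θ * hA.eigenvalues i)) (fun i _ => (Real.exp_pos _).le) (Finset.mem_univ k)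

lemma laplace_aux {Ω : Type*} [MeasurableSpace Ω] (μ : Measure Ω) [IsProbabilityMeasure μ]
    {d : ℕ} (hd : 0 < d) (X : Ω → Matrix (Fin d) (Fin d) ℂ) (θ : ℝ)
    (hint : Integrable (fun ω => (Matrix.trace (mexp ((θ : ℂ) • X ω))).re) μ)
    (Y : Ω → ℝ) (hY : Integrable Y μ)
    (hbound : ∀ ω, Real.exp (θ * Y ω) ≤ (Matrix.trace (mexp ((θ : ℂ) • X ω))).re) :
    Integrable (fun ω => Real.exp (θ * Y ω)) μ ∧
    ProbabilityTheory.mgf Y μ θ ≤ d * traceMgf μ X θ ∧ 0 < traceMgf μ X θ ∧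
    θ * ∫ ω, Y ω ∂μ ≤ Real.log d + Real.log (traceMgf μ X θ) := by
  have hd' : (0 : ℝ) < d := by exact_mod_cast hd
  have hintexp : Integrable (fun ω => Real.exp (θ * Y ω)) μ := by
    refine hint.mono' ?_ ?_
    · exact Real.continuous_exp.comp_aestronglyMeasurable (hY.aestronglyMeasurable.const_mul θ)
    · exact Filter.Eventually.of_forall fun ω => by
        rw [Real.norm_of_nonneg (Real.exp_pos _).le]; exact hbound ω
  have hm_eq : (d : ℝ) * traceMgf μ X θ
      = ∫ ω, (Matrix.trace (mexp ((θ : ℂ) • X ω))).re ∂μ := by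
    rw [traceMgf, integral_div]
    field_simp
  have hmgf_le : ProbabilityTheory.mgf Y μ θ ≤ d * traceMgf μ X θ := by
    rw [hm_eq, ProbabilityTheory.mgf]
    exact integral_mono hintexp hint hbound
  have hmgf_pos : 0 < ProbabilityTheory.mgf Y μ θ := ProbabilityTheory.mgf_pos hintexp
  have hm_pos : 0 < traceMgf μ X θ := by nlinarith [hmgf_pos, hmgf_le, hd']
  refine ⟨hintexp, hmgf_le, hm_pos, ?_⟩
  have hjen : Real.exp (∫ ω, θ * Y ω ∂μ) ≤ ∫ ω, Real.exp (θ * Y ω) ∂μ := by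
    refine convexOn_exp.map_integral_le (f := fun ω => θ * Y ω) ?_ isClosed_univ ?_ ?_ ?_
    · exact Real.continuous_exp.continuousOn
    · exact Filter.Eventually.of_forall fun ω => Set.mem_univ _
    · exact hY.const_mul θ
    · exact hintexp
  rw [integral_const_mul] at hjen
  have h2 : Real.exp (θ * ∫ ω, Y ω ∂μ) ≤ d * traceMgf μ X θ := le_trans hjen hmgf_le
  have h3 : θ * ∫ ω, Y ω ∂μ ≤ Real.log (d * traceMgf μ X θ) :=
    (Real.le_log_iff_exp_le (by positivity)).mpr h2
  rwa [Real.log_mul hd'.ne' hm_pos.ne'] at h3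


/-- **Matrix Laplace Transform Method.**  For a random `d × d` Hermitian matrix `X` with
normalized trace mgf `m(θ) = 𝔼 tr̄ e^{θX}`: tail bounds for `λ_max` and `λ_min`
(via the infimum over `θ > 0`, resp. `θ < 0`), and bounds on `𝔼 λ_max` and `𝔼 λ_min`. -/
theorem matrix_laplace_transform_method
    {Ω : Type*} [MeasurableSpace Ω] (μ : Measure Ω) [IsProbabilityMeasure μ]
    {d : ℕ} (hd : 0 < d) (X : Ω → Matrix (Fin d) (Fin d) ℂ)
    (hXmeas : ∀ i j, Measurable fun ω => X ω i j)
    (hherm : ∀ ω, (X ω).IsHermitian)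
    (hint : ∀ θ : ℝ, Integrable (fun ω => (Matrix.trace (mexp ((θ : ℂ) • X ω))).re) μ)
    (hmaxint : Integrable (fun ω => lmax (X ω)) μ)
    (hminint : Integrable (fun ω => lmin (X ω)) μ) (t : ℝ) :
    (∀ θ : ℝ, 0 < θ →
        (μ {ω | t ≤ lmax (X ω)}).toReal
          ≤ d * Real.exp (-θ * t + Real.log (traceMgf μ X θ))) ∧
    (∀ θ : ℝ, θ < 0 →
        (μ {ω | lmin (X ω) ≤ t}).toReal
          ≤ d * Real.exp (-θ * t + Real.log (traceMgf μ X θ))) ∧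
    (∀ θ : ℝ, 0 < θ →
        ∫ ω, lmax (X ω) ∂μ ≤ (1 / θ) * (Real.log d + Real.log (traceMgf μ X θ))) ∧
    (∀ θ : ℝ, θ < 0 →
        (1 / θ) * (Real.log d + Real.log (traceMgf μ X θ)) ≤ ∫ ω, lmin (X ω) ∂μ) := by
  refine ⟨fun θ hθ => ?_, fun θ hθ => ?_, fun θ hθ => ?_, fun θ hθ => ?_⟩
  · obtain ⟨hintexp, hmgf_le, hm_pos, -⟩ := laplace_aux μ hd X θ (hint θ)
      (fun ω => lmax (X ω)) hmaxint (fun ω => exp_lmax_le hd (hherm ω) hθ)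
    calc (μ {ω | t ≤ lmax (X ω)}).toReal
        ≤ Real.exp (-θ * t) * ProbabilityTheory.mgf (fun ω => lmax (X ω)) μ θ :=
          ProbabilityTheory.measure_ge_le_exp_mul_mgf t hθ.le hintexp
      _ ≤ Real.exp (-θ * t) * (d * traceMgf μ X θ) := by
          exact mul_le_mul_of_nonneg_left hmgf_le (Real.exp_pos _).le
      _ = d * Real.exp (-θ * t + Real.log (traceMgf μ X θ)) := by
          rw [Real.exp_add, Real.exp_log hm_pos]; ring
  · obtain ⟨hintexp, hmgf_le, hm_pos, -⟩ := laplace_aux μ hd X θ (hint θ)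
      (fun ω => lmin (X ω)) hminint (fun ω => exp_lmin_le hd (hherm ω) hθ)
    calc (μ {ω | lmin (X ω) ≤ t}).toReal
        ≤ Real.exp (-θ * t) * ProbabilityTheory.mgf (fun ω => lmin (X ω)) μ θ :=
          ProbabilityTheory.measure_le_le_exp_mul_mgf t hθ.le hintexp
      _ ≤ Real.exp (-θ * t) * (d * traceMgf μ X θ) := by
          exact mul_le_mul_of_nonneg_left hmgf_le (Real.exp_pos _).le
      _ = d * Real.exp (-θ * t + Real.log (traceMgf μ X θ)) := by
          rw [Real.exp_add, Real.exp_log hm_pos]; ring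
  · obtain ⟨-, -, -, h⟩ := laplace_aux μ hd X θ (hint θ)
      (fun ω => lmax (X ω)) hmaxint (fun ω => exp_lmax_le hd (hherm ω) hθ)
    rw [one_div_mul_eq_div]
    exact (le_div_iff₀' hθ).mpr h
  · obtain ⟨-, -, -, h⟩ := laplace_aux μ hd X θ (hint θ)
      (fun ω => lmin (X ω)) hminint (fun ω => exp_lmin_le hd (hherm ω) hθ)
    rw [one_div_mul_eq_div]
    exact (div_le_iff_of_neg hθ).mpr (by rw [mul_comm]; exact h)
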